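/- Every graph in G_sc has a generating sequence, i.e., a sequence (G_1, …, G_k) of graphs each isomorphic to K3 or the complement of C6, such that for each i < k the graph (G_1 ∪ … ∪ G_i) ∩ G_{i+1} is isomorphic to K2 or K3, and G = G_1 ∪ … ∪ G_k. -/

import Mathlib

open SimpleGraph

/-- `S` is a stable cutset of `G`: an independent set whose removal disconnects `G`. -/
def SimpleGraph.IsStableCutset {V : Type*} (G : SimpleGraph V) (S : Set V) : Prop :=
  (∀ a ∈ S, ∀ b ∈ S, ¬ G.Adj a b) ∧ ¬ (G.induce Sᶜ).Preconnected

def SimpleGraph.HasStableCutset {V : Type*} (G : SimpleGraph V) : Prop :=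
  ∃ S : Set V, G.IsStableCutset S

/-- The cycle on six vertices. -/
def CycleSix : SimpleGraph (Fin 6) := SimpleGraph.fromRel (fun i j => j = i + 1)

/-- The complement of `C₆`, i.e. the triangular prism. -/
def PrismGraph : SimpleGraph (Fin 6) := CycleSixᶜ

/-- Graphs on (subsets of) a fixed ambient vertex type `α`, with graph-wise
union and intersection given by the lattice structure. -/
abbrev AmbGraph (α : Type*) := SimpleGraph.Subgraph (⊤ : SimpleGraph α)

def IsK2 {α : Type*} (H : AmbGraph α) : Prop :=
  Nonempty (H.coe ≃g (⊤ : SimpleGraph (Fin 2)))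

def IsK3 {α : Type*} (H : AmbGraph α) : Prop :=
  Nonempty (H.coe ≃g (⊤ : SimpleGraph (Fin 3)))

def IsPrism {α : Type*} (H : AmbGraph α) : Prop :=
  Nonempty (H.coe ≃g PrismGraph)

/-- The class `G_sc` of Le and Pfender. -/
inductive Gsc {α : Type*} : AmbGraph α → Prop
  | k3 (H : AmbGraph α) : IsK3 H → Gsc H
  | prism (H : AmbGraph α) : IsPrism H → Gsc H
  | union (G H : AmbGraph α) : Gsc G → Gsc H →
      (IsK2 (G ⊓ H) ∨ IsK3 (G ⊓ H)) → Gsc (G ⊔ H)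

def unionList {α : Type*} (L : List (AmbGraph α)) : AmbGraph α := L.foldr (· ⊔ ·) ⊥

/-- `L = (G₁,…,G_k)` is a generating sequence for `G`. -/
def IsGenSeq {α : Type*} (L : List (AmbGraph α)) (G : AmbGraph α) : Prop :=
  L ≠ [] ∧ (∀ H ∈ L, IsK3 H ∨ IsPrism H) ∧
  (∀ i : ℕ, (h : i + 1 < L.length) →
     IsK2 (unionList (L.take (i + 1)) ⊓ L.get ⟨i + 1, h⟩) ∨
     IsK3 (unionList (L.take (i + 1)) ⊓ L.get ⟨i + 1, h⟩)) ∧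
  unionList L = G

section Aux

variable {α : Type*}

/-- A subgraph is "complete" if any two of its vertices are adjacent in it. -/
def IsComp (H : AmbGraph α) : Prop :=
  ∀ ⦃x⦄, x ∈ H.verts → ∀ ⦃y⦄, y ∈ H.verts → x ≠ y → H.Adj x y

lemma isComp_of_iso_top {β : Type*} {H : AmbGraph α} (e : H.coe ≃g (⊤ : SimpleGraph β)) :
    IsComp H := by
  intro x hx y hy hxy
  have hcoe : H.coe.Adj ⟨x, hx⟩ ⟨y, hy⟩ := by
    rw [← e.map_adj_iff, top_adj]
    intro hc
    exact hxy (congrArg Subtype.val (e.toEquiv.injective hc))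
  rwa [SimpleGraph.Subgraph.coe_adj] at hcoe

lemma isComp_of_k2k3 {H : AmbGraph α} (h : IsK2 H ∨ IsK3 H) : IsComp H := by
  rcases h with ⟨⟨e⟩⟩ | ⟨⟨e⟩⟩
  exacts [isComp_of_iso_top e, isComp_of_iso_top e]

lemma le_of_verts_subset {T A B : AmbGraph α} (hT : T ≤ A ⊔ B) (hABc : IsComp (A ⊓ B))
    (hsub : T.verts ⊆ A.verts) : T ≤ A := by
  refine ⟨hsub, ?_⟩
  intro v w hvw
  have hv := hsub (T.edge_vert hvw)
  have hw := hsub (T.edge_vert hvw.symm)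
  rcases SimpleGraph.Subgraph.sup_adj.mp (hT.2 hvw) with h | h
  · exact h
  · have hvAB : v ∈ (A ⊓ B).verts := ⟨hv, B.edge_vert h⟩
    have hwAB : w ∈ (A ⊓ B).verts := ⟨hw, B.edge_vert h.symm⟩
    exact (SimpleGraph.Subgraph.inf_adj.mp (hABc hvAB hwAB hvw.ne)).1

lemma le_or_le {T A B : AmbGraph α} (hT : T ≤ A ⊔ B) (hTc : IsComp T)
    (hABc : IsComp (A ⊓ B)) : T ≤ A ∨ T ≤ B := by
  by_cases hsub : T.verts ⊆ A.verts
  · exact Or.inl (le_of_verts_subset hT hABc hsub)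
  · right
    obtain ⟨a, haT, haA⟩ := Set.not_subset.mp hsub
    have hTB : T ≤ B ⊔ A := by rwa [sup_comm] at hT
    have hBAc : IsComp (B ⊓ A) := by rwa [inf_comm] at hABc
    refine le_of_verts_subset hTB hBAc ?_
    intro c hc
    by_contra hcB
    have hcA : c ∈ A.verts := by
      rcases (SimpleGraph.Subgraph.verts_sup A B ▸ hT.1 hc) with h | h
      · exact h
      · exact absurd h hcB
    have hac : a ≠ c := fun h => haA (h ▸ hcA)
    have := hT.2 (hTc haT hc hac)
    rcases SimpleGraph.Subgraph.sup_adj.mp this with h | h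
    · exact haA (A.edge_vert h)
    · exact hcB (B.edge_vert h.symm)

lemma unionList_cons (H : AmbGraph α) (L : List (AmbGraph α)) :
    unionList (H :: L) = H ⊔ unionList L := rfl

lemma unionList_append (l1 l2 : List (AmbGraph α)) :
    unionList (l1 ++ l2) = unionList l1 ⊔ unionList l2 := by
  induction l1 with
  | nil => simp [unionList]
  | cons a l ih => simp only [List.cons_append, unionList_cons, ih, sup_assoc]

lemma le_unionList {L : List (AmbGraph α)} {H : AmbGraph α} (h : H ∈ L) :
    H ≤ unionList L := by
  induction L with
  | nil => simp at h
  | cons a l ih =>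
    rw [unionList_cons]
    rcases List.mem_cons.mp h with rfl | h
    · exact le_sup_left
    · exact (ih h).trans le_sup_right

lemma isGenSeq_singleton {H : AmbGraph α} (h : IsK3 H ∨ IsPrism H) : IsGenSeq [H] H := by
  refine ⟨List.cons_ne_nil _ _, ?_, ?_, by simp [unionList]⟩
  · intro K hK; rw [List.mem_singleton] at hK; exact hK ▸ h
  · intro i hi; simp at hi

lemma isGenSeq_append {LA LB : List (AmbGraph α)} {A B : AmbGraph α}
    (hA : IsGenSeq LA A) (hB : IsGenSeq LB B)
    (hT : IsK2 (A ⊓ B) ∨ IsK3 (A ⊓ B))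
    (hhead : ∀ h0 : 0 < LB.length, A ⊓ B ≤ LB.get ⟨0, h0⟩) :
    IsGenSeq (LA ++ LB) (A ⊔ B) := by
  obtain ⟨hA0, hA1, hA2, hA3⟩ := hA
  obtain ⟨hB0, hB1, hB2, hB3⟩ := hB
  have hm : 0 < LA.length := List.length_pos_iff.mpr hA0
  have hn : 0 < LB.length := List.length_pos_iff.mpr hB0
  refine ⟨by simp [hA0], ?_, ?_, by rw [unionList_append, hA3, hB3]⟩
  · intro H hH
    rcases List.mem_append.mp hH with h | h
    exacts [hA1 H h, hB1 H h]
  · intro i hi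
    have hi' := hi
    rw [List.length_append] at hi'
    by_cases hcase : i + 1 < LA.length
    · have htake : (LA ++ LB).take (i + 1) = LA.take (i + 1) := by
        rw [List.take_append, Nat.sub_eq_zero_of_le (le_of_lt hcase)]
        simp
      have hget : (LA ++ LB).get ⟨i + 1, hi⟩ = LA.get ⟨i + 1, hcase⟩ := by
        simp [List.getElem_append_left hcase]
      rw [htake, hget]
      exact hA2 i hcase
    · push_neg at hcase
      obtain ⟨j, hj⟩ : ∃ j, i + 1 - LA.length = j := ⟨_, rfl⟩
      have hjn : j < LB.length := by omega
      have htake : (LA ++ LB).take (i + 1) = LA ++ LB.take j := by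
        rw [List.take_append, List.take_of_length_le hcase, hj]
      have hget : (LA ++ LB).get ⟨i + 1, hi⟩ = LB.get ⟨j, hjn⟩ := by
        simp only [List.get_eq_getElem, List.getElem_append_right hcase, hj]
      rw [htake, hget, unionList_append]
      cases j with
      | zero =>
        have heq : (unionList LA ⊔ unionList (LB.take 0)) ⊓ LB.get ⟨0, hjn⟩ = A ⊓ B := by
          rw [hA3]
          have h1 : unionList (LB.take 0) = ⊥ := rfl
          rw [h1, sup_bot_eq]
          have hXB : LB.get ⟨0, hjn⟩ ≤ B := hB3 ▸ le_unionList (List.get_mem LB ⟨0, hjn⟩)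
          exact le_antisymm (inf_le_inf_left A hXB) (le_inf inf_le_left (hhead hjn))
        rw [heq]; exact hT
      | succ k =>
        have hlen : 0 < (LB.take (k + 1)).length := by
          rw [List.length_take]; omega
        have h0mem : LB.get ⟨0, hn⟩ ∈ LB.take (k + 1) := by
          have h3 : (LB.take (k + 1)).get ⟨0, hlen⟩ = LB.get ⟨0, hn⟩ := by
            simp only [List.get_eq_getElem, List.getElem_take]
          exact h3 ▸ List.get_mem _ ⟨0, hlen⟩
        have hXB : LB.get ⟨k + 1, hjn⟩ ≤ B := hB3 ▸ le_unionList (List.get_mem LB ⟨k + 1, hjn⟩)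
        have hP : A ⊓ B ≤ unionList (LB.take (k + 1)) := (hhead hn).trans (le_unionList h0mem)
        have heq : (unionList LA ⊔ unionList (LB.take (k + 1))) ⊓ LB.get ⟨k + 1, hjn⟩
            = unionList (LB.take (k + 1)) ⊓ LB.get ⟨k + 1, hjn⟩ := by
          rw [inf_sup_right]
          refine sup_eq_right.mpr (le_inf ?_ inf_le_right)
          rw [hA3]
          exact (inf_le_inf_left A hXB).trans hP
        rw [heq]
        exact hB2 k hjn

lemma adj_of_block {H : AmbGraph α} (h : IsK3 H ∨ IsPrism H) : ∃ u v, H.Adj u v := by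
  rcases h with ⟨⟨e⟩⟩ | ⟨⟨e⟩⟩
  · have : H.coe.Adj (e.symm 0) (e.symm 1) := by
      rw [e.symm.map_adj_iff]
      exact top_adj 0 1 |>.mpr (by decide)
    exact ⟨_, _, (SimpleGraph.Subgraph.coe_adj H _ _) ▸ this⟩
  · have hp : PrismGraph.Adj 0 2 := by
      rw [PrismGraph, compl_adj]
      refine ⟨by decide, ?_⟩
      rw [CycleSix]
      simp [SimpleGraph.fromRel_adj]
    have : H.coe.Adj (e.symm 0) (e.symm 2) := by
      rw [e.symm.map_adj_iff]
      exact hp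
    exact ⟨_, _, (SimpleGraph.Subgraph.coe_adj H _ _) ▸ this⟩

lemma exists_k2_le {H : AmbGraph α} (h : IsK3 H ∨ IsPrism H) :
    ∃ T : AmbGraph α, T ≤ H ∧ IsK2 T := by
  obtain ⟨u, v, huv⟩ := adj_of_block h
  have hne : u ≠ v := huv.ne
  refine ⟨(⊤ : SimpleGraph α).subgraphOfAdj (H.adj_sub huv), SimpleGraph.subgraphOfAdj_le_of_adj H huv, ?_⟩
  set T := (⊤ : SimpleGraph α).subgraphOfAdj (H.adj_sub huv) with hTdef
  have hverts : T.verts = {u, v} := rfl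
  have hmemu : u ∈ T.verts := by rw [hverts]; left; rfl
  have hmemv : v ∈ T.verts := by rw [hverts]; right; rfl
  classical
  refine ⟨⟨?_, ?_⟩⟩
  · exact {
      toFun := fun x => if (x : α) = u then 0 else 1
      invFun := fun i => if i = 0 then ⟨u, hmemu⟩ else ⟨v, hmemv⟩
      left_inv := by
        rintro ⟨x, hx⟩
        rcases hx with rfl | hx
        · simp
        · rw [Set.mem_singleton_iff] at hx
          subst hx
          simp [hne.symm]
      right_inv := by
        intro i
        fin_cases i <;> simp [hne.symm] }
  · rintro ⟨x, hx⟩ ⟨y, hy⟩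
    have hadj : ∀ a b : α, T.Adj a b ↔ (a = u ∧ b = v) ∨ (a = v ∧ b = u) := by
      intro a b
      rw [hTdef, SimpleGraph.subgraphOfAdj_adj, Sym2.eq_iff]
      constructor
      · rintro (⟨rfl, rfl⟩ | ⟨rfl, rfl⟩)
        · exact Or.inl ⟨rfl, rfl⟩
        · exact Or.inr ⟨rfl, rfl⟩
      · rintro (⟨rfl, rfl⟩ | ⟨rfl, rfl⟩)
        · exact Or.inl ⟨rfl, rfl⟩
        · exact Or.inr ⟨rfl, rfl⟩
    rcases hx with rfl | hx <;> [skip; rw [Set.mem_singleton_iff] at hx] <;>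
      rcases hy with rfl | hy
    · simp [SimpleGraph.Subgraph.coe_adj, hadj, hne]
    · rw [Set.mem_singleton_iff] at hy; subst hy
      simp [SimpleGraph.Subgraph.coe_adj, hadj, hne, hne.symm]
    · subst hx
      simp [SimpleGraph.Subgraph.coe_adj, hadj, hne, hne.symm]
    · rw [Set.mem_singleton_iff] at hy; subst hx; subst hy
      simp [SimpleGraph.Subgraph.coe_adj, hadj, hne.symm]

lemma gsc_main {G : AmbGraph α} (h : Gsc G) :
    ∀ T : AmbGraph α, T ≤ G → (IsK2 T ∨ IsK3 T) →
      ∃ (H : AmbGraph α) (rest : List (AmbGraph α)),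
        IsGenSeq (H :: rest) G ∧ T ≤ H := by
  induction h with
  | k3 H hH =>
    intro T hT _
    exact ⟨H, [], isGenSeq_singleton (Or.inl hH), hT⟩
  | prism H hH =>
    intro T hT _
    exact ⟨H, [], isGenSeq_singleton (Or.inr hH), hT⟩
  | union A B hA hB hAB ihA ihB =>
    intro T hT hTk
    have hTc : IsComp T := isComp_of_k2k3 hTk
    have hABc : IsComp (A ⊓ B) := isComp_of_k2k3 hAB
    rcases le_or_le hT hTc hABc with hTA | hTB
    · obtain ⟨HA, ra, hgA, hTHA⟩ := ihA T hTA hTk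
      obtain ⟨HB, rb, hgB, hTHB⟩ := ihB (A ⊓ B) inf_le_right hAB
      refine ⟨HA, ra ++ (HB :: rb), ?_, hTHA⟩
      have := isGenSeq_append hgA hgB hAB (fun _ => hTHB)
      simpa using this
    · obtain ⟨HB, rb, hgB, hTHB⟩ := ihB T hTB hTk
      have hBA : IsK2 (B ⊓ A) ∨ IsK3 (B ⊓ A) := by rwa [inf_comm] at hAB
      obtain ⟨HA, ra, hgA, hTHA⟩ := ihA (B ⊓ A) inf_le_right hBA
      refine ⟨HB, rb ++ (HA :: ra), ?_, hTHB⟩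
      have := isGenSeq_append hgB hgA hBA (fun _ => hTHA)
      rw [sup_comm] at this
      simpa using this

lemma gsc_exists_k2 {G : AmbGraph α} (h : Gsc G) : ∃ T : AmbGraph α, T ≤ G ∧ IsK2 T := by
  induction h with
  | k3 H hH => exact exists_k2_le (Or.inl hH)
  | prism H hH => exact exists_k2_le (Or.inr hH)
  | union A B hA hB hAB ihA ihB =>
    obtain ⟨T, hT, hk⟩ := ihA
    exact ⟨T, hT.trans le_sup_left, hk⟩

end Aux

/-- Every graph in `G_sc` has a generating sequence. -/
theorem gsc_has_genSeq {α : Type*} (G : AmbGraph α) (h : Gsc G) :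
    ∃ L : List (AmbGraph α), IsGenSeq L G := by
  obtain ⟨T, hT, hk⟩ := gsc_exists_k2 h
  obtain ⟨H, rest, hgen, _⟩ := gsc_main h T hT (Or.inl hk)
  exact ⟨H :: rest, hgen⟩
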